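/- Let P > 0, λ > 1/(1+P) with λ ≠ 1, and q ≠ 0, r ≠ 0 be real numbers, and set θ = q/(1−λ). Let g(x) = a (1 − (λ−1)|x|^{P})_+^{1/(λ−1)} with a > 0 the normalizing constant making g a probability density. Then for every probability density function f that is differentiable with f' < 0 on its interval support (x_i, x_f), the down-moment–Fisher inequality holds: Ξ_{P,(2−r)θ,θ}[f]^{1/P} · φ_{q,r}[f]^{qr/(λ−1)} ≥ σ_P[g] / N_λ[g], whenever all quantities are finite. -/

import Mathlib

open MeasureTheory Set Filter Topology

noncomputable section

/-- The open interval with extended-real endpoints, viewed as a set of reals. -/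
def intIoo (a b : EReal) : Set ℝ := {x : ℝ | a < (x : EReal) ∧ (x : EReal) < b}

lemma upset_bound (w : ℝ → ENNReal) (hw : Measurable w)
    (u : ℝ → ENNReal) (hu : ∀ x, u x = ∫⁻ t in Ioi x, w t)
    (A : Set ℝ) (hA : ∀ ⦃x y⦄, x ∈ A → x ≤ y → y ∈ A)
    (C : ENNReal) (hAu : ∀ x ∈ A, u x ≤ C) :
    (volume.withDensity w) A ≤ C := by
  set ν := volume.withDensity w with hν
  have hνIoi : ∀ x : ℝ, ν (Ioi x) = u x := by
    intro x
    rw [hν, withDensity_apply _ measurableSet_Ioi, hu]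
  rcases A.eq_empty_or_nonempty with h | hne
  · simp [h]
  by_cases hbdd : BddBelow A
  · set b := sInf A with hb
    have hsub : A ⊆ Ici b := fun a haA => csInf_le hbdd haA
    have hIci : ν (Ici b) ≤ C := by
      have h1 : ν {b} = 0 := by
        rw [hν, withDensity_apply _ (measurableSet_singleton b)]
        exact setLIntegral_measure_zero _ _ (Real.volume_singleton)
      have h2 : ν (Ioi b) ≤ C := by
        have hU : Ioi b = ⋃ n : ℕ, Ioi (b + 1/(n+1)) := by
          ext x
          simp only [mem_Ioi, mem_iUnion]
          constructor
          · intro hx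
            obtain ⟨n, hn⟩ := exists_nat_one_div_lt (sub_pos.2 hx)
            exact ⟨n, by push_cast at hn ⊢; linarith⟩
          · rintro ⟨n, hn⟩
            have : (0:ℝ) < 1/(n+1) := by positivity
            linarith
        have hdir : Directed (fun x1 x2 : Set ℝ => x1 ⊆ x2) (fun n : ℕ => Ioi (b + 1/(n+1))) := by
          intro m n
          refine ⟨max m n, ?_, ?_⟩ <;>
          · apply Ioi_subset_Ioi
            have : ((1:ℝ)/(max m n + 1)) ≤ 1/(m+1) ∧ ((1:ℝ)/(max m n + 1)) ≤ 1/(n+1) := by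
              constructor <;>
              · apply one_div_le_one_div_of_le (by positivity)
                push_cast
                simp [le_max_iff]
            rcases this with ⟨h1, h2⟩
            first
            | linarith [h1]
            | linarith [h2]
        rw [hU, hdir.measure_iUnion]
        refine iSup_le fun n => ?_
        rw [hνIoi]
        refine hAu _ ?_
        obtain ⟨a, haA, halt⟩ := Real.lt_sInf_add_pos hne (show (0:ℝ) < 1/(n+1) by positivity)
        exact hA haA (le_of_lt halt)
      calc ν (Ici b) ≤ ν ({b} ∪ Ioi b) := by
            apply measure_mono; intro x hx
            rcases eq_or_lt_of_le (mem_Ici.1 hx) with h | h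
            · exact Or.inl (by simp [← h])
            · exact Or.inr h
        _ ≤ ν {b} + ν (Ioi b) := measure_union_le _ _
        _ ≤ C := by rw [h1, zero_add]; exact h2
    exact le_trans (measure_mono hsub) hIci
  · have hall : ∀ z : ℝ, z ∈ A := by
      intro z
      have hz : ¬ (z ∈ lowerBounds A) := fun h => hbdd ⟨z, h⟩
      simp only [lowerBounds, mem_setOf_eq] at hz
      push_neg at hz
      obtain ⟨a, haA, ha⟩ := hz
      exact hA haA (le_of_lt ha)
    have hU : (univ : Set ℝ) = ⋃ n : ℕ, Ioi (-(n:ℝ)) := by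
      ext x
      simp only [mem_univ, true_iff, mem_iUnion, mem_Ioi]
      obtain ⟨n, hn⟩ := exists_nat_gt (-x)
      exact ⟨n, by linarith⟩
    have hdir : Directed (fun x1 x2 : Set ℝ => x1 ⊆ x2) (fun n : ℕ => Ioi (-(n:ℝ))) := by
      intro m n
      refine ⟨max m n, Ioi_subset_Ioi ?_, Ioi_subset_Ioi ?_⟩ <;>
        simp [neg_le_neg_iff, le_max_iff]
    calc ν A ≤ ν univ := measure_mono (subset_univ A)
      _ = ⨆ n : ℕ, ν (Ioi (-(n:ℝ))) := by rw [hU, hdir.measure_iUnion]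
      _ ≤ C := by
          refine iSup_le fun n => ?_
          rw [hνIoi]
          exact hAu _ (hall _)

lemma subst_le (I : Set ℝ) (w : ℝ → ENNReal) (hw : Measurable w)
    (hw0 : ∀ x ∉ I, w x = 0)
    (u : ℝ → ENNReal) (hu : ∀ x, u x = ∫⁻ t in Ioi x, w t)
    (hfin : ∀ x ∈ I, u x ≠ ⊤) (hpos : ∀ x ∈ I, 0 < u x)
    (G : ℝ → ℝ) (hG : Measurable G) (hG0 : ∀ y, 0 ≤ G y)
    (hGanti : AntitoneOn G (Ici 0)) :
    ∫⁻ x, ENNReal.ofReal (G ((u x).toReal)) * w x ≤ ∫⁻ y in Ioi 0, ENNReal.ofReal (G y) := by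
  have huanti : Antitone u := by
    intro x y hxy
    rw [hu, hu]
    exact lintegral_mono_set (Ioi_subset_Ioi hxy)
  have hum : Measurable u := huanti.measurable
  have hurm : Measurable fun x => (u x).toReal := hum.ennreal_toReal
  have hGum : Measurable fun x => G ((u x).toReal) := hG.comp hurm
  set ν := volume.withDensity w with hν
  -- LHS as integral over ν
  have hLHS : ∫⁻ x, ENNReal.ofReal (G ((u x).toReal)) * w x
      = ∫⁻ x, ENNReal.ofReal (G ((u x).toReal)) ∂ν := by
    rw [hν, lintegral_withDensity_eq_lintegral_mul volume hw
      (by exact (ENNReal.measurable_ofReal.comp hGum))]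
    congr 1
    ext x
    simp [mul_comm]
  rw [hLHS]
  -- layer cake both sides
  rw [lintegral_eq_lintegral_meas_lt ν
    (Filter.Eventually.of_forall fun x => hG0 _)
    ((hG.comp hurm).aemeasurable)]
  rw [lintegral_eq_lintegral_meas_lt (volume.restrict (Ioi 0))
    (Filter.Eventually.of_forall fun y => hG0 _) hG.aemeasurable]
  refine lintegral_mono_ae (((ae_restrict_mem measurableSet_Ioi)).mono fun s hs => ?_)
  -- fix s > 0
  have hrestr : (volume.restrict (Ioi 0)) {y : ℝ | s < G y}
      = volume ({y : ℝ | s < G y} ∩ Ioi 0) :=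
    Measure.restrict_apply (measurableSet_lt measurable_const hG)
  set E := {y : ℝ | s < G y} ∩ Ioi 0 with hE
  have hdown : ∀ ⦃z y : ℝ⦄, y ∈ E → 0 < z → z ≤ y → z ∈ E := by
    rintro z y ⟨hyG, hy0⟩ hz0 hzy
    exact ⟨lt_of_lt_of_le hyG (hGanti (le_of_lt hz0) (le_of_lt (mem_Ioi.1 hy0)) hzy), hz0⟩
  -- membership of u x in E for x in T ∩ I
  have hmem : ∀ x, x ∈ I → s < G ((u x).toReal) → (u x).toReal ∈ E := by
    intro x hxI hxs
    exact ⟨hxs, ENNReal.toReal_pos (hpos x hxI).ne' (hfin x hxI)⟩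
  -- key bound using upset_bound
  have key : ∀ c : ℝ, 0 ≤ c → (∀ x ∈ I, s < G ((u x).toReal) → u x ≤ ENNReal.ofReal c) →
      ν {x : ℝ | s < G ((u x).toReal)} ≤ ENNReal.ofReal c := by
    intro c hc hbound
    set A := {x : ℝ | u x ≤ ENNReal.ofReal c} with hA
    have hup : ∀ ⦃x y : ℝ⦄, x ∈ A → x ≤ y → y ∈ A := fun x y hx hxy =>
      le_trans (huanti hxy) hx
    have hAb : ν A ≤ ENNReal.ofReal c :=
      upset_bound w hw u hu A hup _ (fun x hx => hx)
    have hcompl : ν {x : ℝ | w x = 0} = 0 := by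
      have hms : MeasurableSet {x : ℝ | w x = 0} := hw (measurableSet_singleton 0)
      rw [hν, withDensity_apply w hms]
      rw [setLIntegral_congr_fun hms (fun x hx => hx)]
      simp
    have hsub : {x : ℝ | s < G ((u x).toReal)} ⊆ A ∪ {x : ℝ | w x = 0} := by
      intro x hx
      by_cases hxI : x ∈ I
      · exact Or.inl (hbound x hxI hx)
      · exact Or.inr (hw0 x hxI)
    calc ν {x : ℝ | s < G ((u x).toReal)} ≤ ν (A ∪ {x : ℝ | w x = 0}) := measure_mono hsub
      _ ≤ ν A + ν {x : ℝ | w x = 0} := measure_union_le _ _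
      _ ≤ ENNReal.ofReal c := by rw [hcompl, add_zero]; exact hAb
  -- now case analysis on E
  rcases E.eq_empty_or_nonempty with hEe | hEne
  · refine le_trans ?_ zero_le
    have h0 : ν {x : ℝ | s < G ((u x).toReal)} ≤ ENNReal.ofReal 0 := by
      refine key 0 le_rfl fun x hxI hxs => absurd (hmem x hxI hxs) ?_
      rw [hEe]; exact notMem_empty _
    simpa using h0
  by_cases hEbdd : BddAbove E
  · set c := sSup E with hc
    have hc0 : 0 < c := by
      obtain ⟨y, hy⟩ := hEne
      exact lt_of_lt_of_le (mem_Ioi.1 hy.2) (le_csSup hEbdd hy)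
    have hL : ν {x : ℝ | s < G ((u x).toReal)} ≤ ENNReal.ofReal c := by
      refine key c hc0.le fun x hxI hxs => ?_
      have h1 : (u x).toReal ≤ c := le_csSup hEbdd (hmem x hxI hxs)
      exact (ENNReal.le_ofReal_iff_toReal_le (hfin x hxI) hc0.le).2 h1
    have hR : ENNReal.ofReal c ≤ (volume.restrict (Ioi 0)) {y : ℝ | s < G y} := by
      rw [hrestr]
      have hsub2 : Ioo 0 c ⊆ E := by
        intro z hz
        obtain ⟨y, hyE, hzy⟩ := exists_lt_of_lt_csSup hEne hz.2
        exact hdown hyE hz.1 hzy.le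
      calc ENNReal.ofReal c = volume (Ioo 0 c) := by rw [Real.volume_Ioo, sub_zero]
        _ ≤ volume E := measure_mono hsub2
    exact le_trans hL hR
  · -- E unbounded above: E = Ioi 0, RHS infinite
    have hEIoi : E = Ioi 0 := by
      refine Subset.antisymm (fun y hy => hy.2) fun z hz => ?_
      have : ¬ (z ∈ upperBounds E) := fun h => hEbdd ⟨z, h⟩
      simp only [upperBounds, mem_setOf_eq] at this
      push_neg at this
      obtain ⟨y, hyE, hzy⟩ := this
      exact hdown hyE (mem_Ioi.1 hz) hzy.le
    rw [hrestr]
    have : volume E = ⊤ := by rw [hEIoi, Real.volume_Ioi]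
    rw [this]
    exact le_top


set_option maxHeartbeats 2000000 in
/-- the down-moment–Fisher inequality (classical domain):
`Ξ_{P,(2-r)θ,θ}[f]^{1/P} · φ_{q,r}[f]^{qr/(λ-1)} ≥ σ_P[g]/N_λ[g]`. -/
theorem down_moment_fisher_inequality_classical
    (P lam q r θ a : ℝ)
    (hP : 0 < P) (hlam : 1 / (1 + P) < lam) (hlam1 : lam ≠ 1)
    (hq : q ≠ 0) (hr : r ≠ 0)
    (hθ : θ = q / (1 - lam))
    (g₀ : ℝ → ℝ) (ha : 0 < a)
    (hg₀ : ∀ x, g₀ x = a * (max (1 - (lam - 1) * |x| ^ P) 0) ^ ((1 : ℝ) / (lam - 1)))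
    (hg₀_int : (∫ x, g₀ x) = 1)
    (xi xf : EReal) (hif : xi < xf)
    (f f' : ℝ → ℝ)
    (hf_meas : Measurable f)
    (hf_nonneg : ∀ x, 0 ≤ f x)
    (hf_supp : ∀ x ∉ intIoo xi xf, f x = 0)
    (hf_int : (∫ x, f x) = 1)
    (hf' : ∀ x ∈ intIoo xi xf, HasDerivAt f (f' x) x)
    (hf'_neg : ∀ x ∈ intIoo xi xf, f' x < 0)
    (hfin_inner : ∀ x ∈ intIoo xi xf,
      IntegrableOn (fun t => f t ^ (1 - (2 - r) * θ) * |f' t| ^ θ) (intIoo (x : EReal) xf))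
    (hfin1 : IntegrableOn
      (fun x : ℝ =>
        |(∫ t in intIoo (x : EReal) xf, f t ^ (1 - (2 - r) * θ) * |f' t| ^ θ)| ^ P * f x)
      (intIoo xi xf))
    (hfin2 : IntegrableOn (fun x => |f x ^ (r - 2) * f' x| ^ q * f x) (intIoo xi xf))
    (hfin3 : Integrable (fun x => |x| ^ P * g₀ x))
    (hfin4 : Integrable (fun x => g₀ x ^ lam)) :
    (∫ x in intIoo xi xf,
        |(∫ t in intIoo (x : EReal) xf, f t ^ (1 - (2 - r) * θ) * |f' t| ^ θ)| ^ P * f x)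
        ^ ((1 : ℝ) / P)
      * ((∫ x in intIoo xi xf, |f x ^ (r - 2) * f' x| ^ q * f x)
          ^ ((1 : ℝ) / (q * r))) ^ (q * r / (lam - 1))
    ≥ (∫ x, |x| ^ P * g₀ x) ^ ((1 : ℝ) / P)
      / (∫ x, g₀ x ^ lam) ^ ((1 : ℝ) / (1 - lam)) := by
  have hP' : P ≠ 0 := hP.ne'
  have hlam0 : 0 < lam := lt_trans (by positivity) hlam
  have hlam1' : lam - 1 ≠ 0 := sub_ne_zero.2 hlam1
  set I : Set ℝ := intIoo xi xf with hIdef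
  have hIopen : IsOpen I := by
    have h1 : I = (fun x : ℝ => (x : EReal)) ⁻¹' (Ioo xi xf) := rfl
    rw [h1]; exact (isOpen_Ioo).preimage continuous_coe_real_ereal
  have hImeas : MeasurableSet I := hIopen.measurableSet
  obtain ⟨x₀, hx₀1, hx₀2⟩ := EReal.exists_between_coe_real hif
  have hx₀I : x₀ ∈ I := ⟨hx₀1, hx₀2⟩
  have hIvol : 0 < volume I := hIopen.measure_pos volume ⟨x₀, hx₀I⟩
  have hIcc : ∀ {x y : ℝ}, x ∈ I → y ∈ I → Icc x y ⊆ I := by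
    rintro x y ⟨hx1, hx2⟩ ⟨hy1, hy2⟩ z ⟨hz1, hz2⟩
    exact ⟨lt_of_lt_of_le hx1 (EReal.coe_le_coe_iff.2 hz1),
      lt_of_le_of_lt (EReal.coe_le_coe_iff.2 hz2) hy2⟩
  have hnext : ∀ x ∈ I, ∃ y, x < y ∧ y ∈ I := by
    intro x hx
    obtain ⟨y, hy1, hy2⟩ := EReal.exists_between_coe_real hx.2
    exact ⟨y, EReal.coe_lt_coe_iff.1 hy1, ⟨lt_trans hx.1 hy1, hy2⟩⟩
  have hfpos : ∀ x ∈ I, 0 < f x := by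
    intro x hx
    obtain ⟨y, hxy, hyI⟩ := hnext x hx
    have hsub : Icc x y ⊆ I := hIcc hx hyI
    have hcont : ContinuousOn f (Icc x y) :=
      fun z hz => ((hf' z (hsub hz)).continuousAt).continuousWithinAt
    obtain ⟨c, hc, hc'⟩ := exists_hasDerivAt_eq_slope f f' hxy hcont
      (fun z hz => hf' z (hsub (Ioo_subset_Icc_self hz)))
    have hcneg : f' c < 0 := hf'_neg c (hsub (Ioo_subset_Icc_self hc))
    rw [hc'] at hcneg
    have hyx : 0 < y - x := by linarith
    have hfy : f y < f x := by
      rcases div_neg_iff.1 hcneg with ⟨h1, h2⟩ | ⟨h1, h2⟩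
      · linarith
      · linarith
    exact lt_of_le_of_lt (hf_nonneg y) hfy
  have hderiv : ∀ x ∈ I, deriv f x = f' x := fun x hx => (hf' x hx).deriv
  set W : ℝ → ℝ := fun x => f x ^ (1 - (2 - r) * θ) * |deriv f x| ^ θ with hWdef
  have hWmeas : Measurable W := by rw [hWdef]; fun_prop
  have hWeq : ∀ x ∈ I, W x = f x ^ (1 - (2 - r) * θ) * |f' x| ^ θ := by
    intro x hx; rw [hWdef]; simp only [hderiv x hx]
  have hWpos : ∀ x ∈ I, 0 < W x := by
    intro x hx
    rw [hWeq x hx]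
    exact mul_pos (Real.rpow_pos_of_pos (hfpos x hx) _)
      (Real.rpow_pos_of_pos (abs_pos.2 (hf'_neg x hx).ne) _)
  have hWnonneg : ∀ x, 0 ≤ W x := fun x =>
    mul_nonneg (Real.rpow_nonneg (hf_nonneg x) _) (Real.rpow_nonneg (abs_nonneg _) _)
  set wE : ℝ → ENNReal := I.indicator (fun x => ENNReal.ofReal (W x)) with hwEdef
  have hwEmeas : Measurable wE := by
    rw [hwEdef]; exact (ENNReal.measurable_ofReal.comp hWmeas).indicator hImeas
  set uE : ℝ → ENNReal := fun x => ∫⁻ t in Ioi x, wE t with huEdef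
  have huEanti : Antitone uE := by
    intro x y hxy
    rw [huEdef]
    exact lintegral_mono_set (Ioi_subset_Ioi hxy)
  have huEmeas : Measurable uE := huEanti.measurable
  set u : ℝ → ℝ := fun x => (uE x).toReal with hudef
  have humeas : Measurable u := by rw [hudef]; exact huEmeas.ennreal_toReal
  have hunonneg : ∀ x, 0 ≤ u x := fun x => ENNReal.toReal_nonneg
  have hintmeas : ∀ c : EReal, MeasurableSet (intIoo c xf) := fun c =>
    continuous_coe_real_ereal.measurable measurableSet_Ioo
  have hintsub : ∀ x ∈ I, intIoo (x : EReal) xf ⊆ I := by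
    rintro x hx z ⟨hz1, hz2⟩
    exact ⟨lt_trans hx.1 hz1, hz2⟩
  have hIinter : ∀ x ∈ I, I ∩ Ioi x = intIoo (x : EReal) xf := by
    intro x hx
    ext z
    constructor
    · rintro ⟨hzI, hz⟩
      exact ⟨EReal.coe_lt_coe_iff.2 hz, hzI.2⟩
    · rintro ⟨hz1, hz2⟩
      exact ⟨⟨lt_trans hx.1 hz1, hz2⟩, EReal.coe_lt_coe_iff.1 hz1⟩
  have huE_eq : ∀ x ∈ I, uE x = ∫⁻ t in intIoo (x : EReal) xf, ENNReal.ofReal (W t) := by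
    intro x hx
    rw [huEdef]
    show ∫⁻ t in Ioi x, wE t = _
    rw [hwEdef, lintegral_indicator hImeas, Measure.restrict_restrict hImeas, hIinter x hx]
  have hinner0 : ∀ x ∈ I, ENNReal.ofReal
      (∫ t in intIoo (x : EReal) xf, f t ^ (1 - (2 - r) * θ) * |f' t| ^ θ) = uE x := by
    intro x hx
    rw [ofReal_integral_eq_lintegral_ofReal (hfin_inner x hx)
      (Filter.Eventually.of_forall fun t =>
        mul_nonneg (Real.rpow_nonneg (hf_nonneg t) _) (Real.rpow_nonneg (abs_nonneg _) _))]
    rw [huE_eq x hx]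
    exact setLIntegral_congr_fun (hintmeas _)
      (fun t ht => by rw [← hWeq t (hintsub x hx ht)])
  have huEfin : ∀ x ∈ I, uE x ≠ ⊤ := fun x hx => by
    rw [← hinner0 x hx]; exact ENNReal.ofReal_ne_top
  have hinner : ∀ x ∈ I,
      (∫ t in intIoo (x : EReal) xf, f t ^ (1 - (2 - r) * θ) * |f' t| ^ θ) = u x := by
    intro x hx
    show _ = (uE x).toReal
    rw [← hinner0 x hx, ENNReal.toReal_ofReal]
    exact integral_nonneg fun t =>
      mul_nonneg (Real.rpow_nonneg (hf_nonneg t) _) (Real.rpow_nonneg (abs_nonneg _) _)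
  have huEpos : ∀ x ∈ I, 0 < uE x := by
    intro x hx
    rw [huE_eq x hx]
    obtain ⟨y, hxy, hyI⟩ := hnext x hx
    have hsub2 : Ioo x y ⊆ intIoo (x : EReal) xf := fun z hz =>
      ⟨EReal.coe_lt_coe_iff.2 hz.1, lt_trans (EReal.coe_lt_coe_iff.2 hz.2) hyI.2⟩
    refine lt_of_lt_of_le ?_ (lintegral_mono_set hsub2)
    rw [lintegral_pos_iff_support
      (show Measurable fun t => ENNReal.ofReal (W t) from ENNReal.measurable_ofReal.comp hWmeas)]
    have hsupp : Ioo x y ⊆ Function.support fun t => ENNReal.ofReal (W t) := by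
      intro z hz
      have hzI : z ∈ I := hIcc hx hyI (Ioo_subset_Icc_self hz)
      simp only [Function.mem_support, ne_eq, ENNReal.ofReal_eq_zero, not_le]
      exact hWpos z hzI
    calc (0:ENNReal) < volume (Ioo x y) := by
          rw [Real.volume_Ioo]; exact ENNReal.ofReal_pos.2 (by linarith)
      _ ≤ (volume.restrict (Ioo x y)) (Function.support fun t => ENNReal.ofReal (W t)) := by
          rw [Measure.restrict_apply' measurableSet_Ioo]
          exact measure_mono fun z hz => ⟨hsupp hz, hz⟩
  have hupos : ∀ x ∈ I, 0 < u x := fun x hx =>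
    ENNReal.toReal_pos (huEpos x hx).ne' (huEfin x hx)
  -- Xi and F
  set Ξ : ℝ := ∫ x in I, u x ^ P * f x with hΞdef
  have hstmteq : ∀ x ∈ I,
      |(∫ t in intIoo (x : EReal) xf, f t ^ (1 - (2 - r) * θ) * |f' t| ^ θ)| ^ P * f x
      = u x ^ P * f x := by
    intro x hx
    rw [hinner x hx, abs_of_nonneg (hunonneg x)]
  have hstmt1 : (∫ x in I,
      |(∫ t in intIoo (x : EReal) xf, f t ^ (1 - (2 - r) * θ) * |f' t| ^ θ)| ^ P * f x) = Ξ :=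
    setIntegral_congr_fun hImeas hstmteq
  have hΞint : IntegrableOn (fun x => u x ^ P * f x) I := hfin1.congr_fun hstmteq hImeas
  have hΞpos : 0 < Ξ := by
    rw [hΞdef, setIntegral_pos_iff_support_of_nonneg_ae
      (Filter.Eventually.of_forall fun x =>
        mul_nonneg (Real.rpow_nonneg (hunonneg x) _) (hf_nonneg x)) hΞint]
    refine lt_of_lt_of_le hIvol (measure_mono fun x hx => ⟨?_, hx⟩)
    exact (mul_pos (Real.rpow_pos_of_pos (hupos x hx) _) (hfpos x hx)).ne'
  set F : ℝ := ∫ x in I, |f x ^ (r - 2) * f' x| ^ q * f x with hFdef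
  have hdpos : ∀ x ∈ I, 0 < f x ^ (r - 2) * |f' x| := fun x hx =>
    mul_pos (Real.rpow_pos_of_pos (hfpos x hx) _) (abs_pos.2 (hf'_neg x hx).ne)
  have habsd : ∀ x ∈ I, |f x ^ (r - 2) * f' x| = f x ^ (r - 2) * |f' x| := by
    intro x hx
    rw [abs_mul, abs_of_nonneg (Real.rpow_nonneg (hf_nonneg x) _)]
  have hFpos : 0 < F := by
    rw [hFdef, setIntegral_pos_iff_support_of_nonneg_ae
      (Filter.Eventually.of_forall fun x =>
        mul_nonneg (Real.rpow_nonneg (abs_nonneg _) _) (hf_nonneg x)) hfin2]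
    refine lt_of_lt_of_le hIvol (measure_mono fun x hx => ⟨?_, hx⟩)
    have h1 : 0 < |f x ^ (r - 2) * f' x| := by rw [habsd x hx]; exact hdpos x hx
    exact (mul_pos (Real.rpow_pos_of_pos h1 _) (hfpos x hx)).ne'
  set FI : ℝ → ℝ := fun x => |f x ^ (r - 2) * deriv f x| ^ q * f x with hFIdef
  have hFIeq : ∀ x ∈ I, |f x ^ (r - 2) * f' x| ^ q * f x = FI x := by
    intro x hx; rw [hFIdef]; simp only [hderiv x hx]
  have hFeq2 : F = ∫ x in I, FI x := setIntegral_congr_fun hImeas hFIeq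
  have hFIint : IntegrableOn FI I := hfin2.congr_fun hFIeq hImeas
  have hFImeas : Measurable FI := by rw [hFIdef]; fun_prop
  have hFInonneg : ∀ x, 0 ≤ FI x := fun x => by
    rw [hFIdef]
    exact mul_nonneg (Real.rpow_nonneg (abs_nonneg _) _) (hf_nonneg x)
  -- g₀ facts
  have hg₀meas : Measurable g₀ := by
    have h1 : g₀ = fun x => a * (max (1 - (lam - 1) * |x| ^ P) 0) ^ ((1 : ℝ) / (lam - 1)) :=
      funext hg₀
    rw [h1]; fun_prop
  have hg₀nonneg : ∀ x, 0 ≤ g₀ x := fun x => by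
    rw [hg₀ x]
    exact mul_nonneg ha.le (Real.rpow_nonneg (le_max_right _ _) _)
  have hmax_pos_of_lt : lam < 1 → ∀ z : ℝ, 0 < max (1 - (lam - 1) * |z| ^ P) 0 := by
    intro hl z
    refine lt_max_iff.2 (Or.inl ?_)
    nlinarith [Real.rpow_nonneg (abs_nonneg z) P]
  have hpow_lam : ∀ m : ℝ, 0 ≤ m → (m = 0 → 1 < lam) →
      (a * m ^ ((1 : ℝ) / (lam - 1))) ^ lam = a ^ lam * m ^ (lam / (lam - 1)) := by
    intro m hm hm0
    rcases eq_or_lt_of_le hm with h | h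
    · have h1 := hm0 h.symm
      rw [← h, Real.zero_rpow (ne_of_gt (one_div_pos.2 (by linarith : (0:ℝ) < lam - 1))),
        mul_zero, Real.zero_rpow hlam0.ne',
        Real.zero_rpow (ne_of_gt (div_pos hlam0 (by linarith))), mul_zero]
    · rw [Real.mul_rpow ha.le (Real.rpow_nonneg hm _), ← Real.rpow_mul hm]
      congr 1
      ring
  have hpow_lam1 : ∀ m : ℝ, 0 ≤ m → (m = 0 → 1 < lam) →
      (a * m ^ ((1 : ℝ) / (lam - 1))) ^ (lam - 1) = a ^ (lam - 1) * m := by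
    intro m hm hm0
    rcases eq_or_lt_of_le hm with h | h
    · have h1 := hm0 h.symm
      rw [← h, Real.zero_rpow (ne_of_gt (one_div_pos.2 (by linarith : (0:ℝ) < lam - 1))),
        mul_zero, Real.zero_rpow (by linarith : lam - 1 ≠ 0), mul_zero]
    · rw [Real.mul_rpow ha.le (Real.rpow_nonneg hm _), ← Real.rpow_mul hm]
      rw [one_div_mul_cancel hlam1', Real.rpow_one]
  have hg₀key : ∀ x, g₀ x ^ lam
      = a ^ (lam - 1) * g₀ x - a ^ (lam - 1) * (lam - 1) * (|x| ^ P * g₀ x) := by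
    intro x
    set m := max (1 - (lam - 1) * |x| ^ P) 0 with hm
    have hm0 : 0 ≤ m := le_max_right _ _
    have hmz : m = 0 → 1 < lam := by
      intro h
      by_contra hl
      push_neg at hl
      have h2 : lam < 1 := lt_of_le_of_ne hl hlam1
      exact absurd h (ne_of_gt (hmax_pos_of_lt h2 x))
    rw [hg₀ x, ← hm, hpow_lam m hm0 hmz]
    rcases eq_or_lt_of_le hm0 with h | h
    · have h1 := hmz h.symm
      rw [← h, Real.zero_rpow (ne_of_gt (div_pos hlam0 (by linarith))),
        Real.zero_rpow (ne_of_gt (one_div_pos.2 (by linarith : (0:ℝ) < lam - 1)))]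
      ring
    · have hmeq : 1 - (lam - 1) * |x| ^ P = m := by
        rcases le_or_gt (1 - (lam - 1) * |x| ^ P) 0 with hv | hv
        · exfalso; rw [hm, max_eq_right hv] at h; exact lt_irrefl 0 h
        · rw [hm, max_eq_left hv.le]
      have e1 : m ^ (lam / (lam - 1)) = m ^ ((1 : ℝ) / (lam - 1)) * m := by
        rw [← Real.rpow_add_one h.ne']
        congr 1
        field_simp
        ring
      have e2 : a ^ lam = a ^ (lam - 1) * a := by
        rw [← Real.rpow_add_one ha.ne']
        congr 1
        ring
      rw [e1, e2]
      linear_combination (-(a ^ (lam - 1) * a * m ^ ((1:ℝ) / (lam - 1)))) * hmeq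
  set M0 : ℝ := ∫ x, |x| ^ P * g₀ x with hM0def
  set G0 : ℝ := ∫ x, g₀ x ^ lam with hG0def
  have ha1 : a ^ ((1:ℝ) - lam) * a ^ (lam - 1) = 1 := by
    rw [← Real.rpow_add ha]
    norm_num
  have hg₀int : Integrable g₀ := by
    have hpt : ∀ x, g₀ x = a ^ ((1:ℝ) - lam) * (g₀ x ^ lam) + (lam - 1) * (|x| ^ P * g₀ x) := by
      intro x
      have h := hg₀key x
      linear_combination (-(a ^ ((1:ℝ) - lam))) * h
        - (g₀ x - (lam - 1) * (|x| ^ P * g₀ x)) * ha1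
    exact ((hfin4.const_mul _).add (hfin3.const_mul _)).congr
      (Filter.Eventually.of_forall fun x => (hpt x).symm)
  have hG0id : G0 = a ^ (lam - 1) - a ^ (lam - 1) * (lam - 1) * M0 := by
    rw [hG0def]
    calc (∫ x, g₀ x ^ lam)
        = ∫ x, (a ^ (lam - 1) * g₀ x - a ^ (lam - 1) * (lam - 1) * (|x| ^ P * g₀ x)) :=
          by exact integral_congr_ae (Filter.Eventually.of_forall fun x => hg₀key x)
      _ = a ^ (lam - 1) * (∫ x, g₀ x) - a ^ (lam - 1) * (lam - 1) * ∫ x, |x| ^ P * g₀ x := by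
          rw [integral_sub (hg₀int.const_mul _) (hfin3.const_mul _),
            integral_const_mul, integral_const_mul]
      _ = _ := by rw [hg₀_int, hM0def]; ring
  -- positivity of M0, G0
  obtain ⟨δ, hδ0, hδp⟩ : ∃ δ : ℝ, 0 < δ ∧ ∀ z : ℝ, |z| < δ → 0 < g₀ z := by
    set c := max (lam - 1) 0 with hc
    have hc0 : 0 ≤ c := le_max_right _ _
    refine ⟨(1 / (c + 1)) ^ ((1:ℝ) / P), by positivity, fun z hz => ?_⟩
    rw [hg₀ z]
    have h1 : |z| ^ P < 1 / (c + 1) := by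
      calc |z| ^ P < ((1 / (c + 1)) ^ ((1:ℝ) / P)) ^ P :=
            Real.rpow_lt_rpow (abs_nonneg z) hz hP
        _ = 1 / (c + 1) := by
            rw [← Real.rpow_mul (by positivity), one_div_mul_cancel hP.ne', Real.rpow_one]
    have h2 : (lam - 1) * |z| ^ P < 1 := by
      rcases le_or_gt (lam - 1) 0 with h | h
      · nlinarith [Real.rpow_nonneg (abs_nonneg z) P]
      · have hceq : c = lam - 1 := max_eq_left h.le
        have h3 : (lam - 1) * |z| ^ P < (lam - 1) * (1 / (c + 1)) :=
          mul_lt_mul_of_pos_left h1 h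
        have h4 : (lam - 1) * (1 / (c + 1)) < 1 := by
          rw [hceq, mul_one_div]
          exact (div_lt_one (by linarith)).2 (by linarith)
        linarith
    exact mul_pos ha (Real.rpow_pos_of_pos (lt_max_iff.2 (Or.inl (by linarith))) _)
  have hM0pos : 0 < M0 := by
    have hsetpos : 0 < ∫ x in Ioo (δ/2) δ, |x| ^ P * g₀ x := by
      rw [setIntegral_pos_iff_support_of_nonneg_ae
        (Filter.Eventually.of_forall fun x =>
          mul_nonneg (Real.rpow_nonneg (abs_nonneg x) _) (hg₀nonneg x)) hfin3.integrableOn]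
      refine lt_of_lt_of_le ?_ (measure_mono fun x hx => ⟨?_, hx⟩)
      · rw [Real.volume_Ioo]; exact ENNReal.ofReal_pos.2 (by linarith)
      · have hx0 : 0 < x := lt_trans (by linarith) hx.1
        have hg : 0 < g₀ x := hδp x (by rw [abs_of_pos hx0]; exact hx.2)
        exact (mul_pos (Real.rpow_pos_of_pos (abs_pos.2 hx0.ne') _) hg).ne'
    rw [hM0def]
    exact lt_of_lt_of_le hsetpos (setIntegral_le_integral hfin3
      (Filter.Eventually.of_forall fun x =>
        mul_nonneg (Real.rpow_nonneg (abs_nonneg x) _) (hg₀nonneg x)))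
  have hG0pos : 0 < G0 := by
    have hsetpos : 0 < ∫ x in Ioo (δ/2) δ, g₀ x ^ lam := by
      rw [setIntegral_pos_iff_support_of_nonneg_ae
        (Filter.Eventually.of_forall fun x =>
          Real.rpow_nonneg (hg₀nonneg x) _) hfin4.integrableOn]
      refine lt_of_lt_of_le ?_ (measure_mono fun x hx => ⟨?_, hx⟩)
      · rw [Real.volume_Ioo]; exact ENNReal.ofReal_pos.2 (by linarith)
      · have hx0 : 0 < x := lt_trans (by linarith) hx.1
        have hg : 0 < g₀ x := hδp x (by rw [abs_of_pos hx0]; exact hx.2)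
        exact (Real.rpow_pos_of_pos hg _).ne'
    rw [hG0def]
    exact lt_of_lt_of_le hsetpos (setIntegral_le_integral hfin4
      (Filter.Eventually.of_forall fun x => Real.rpow_nonneg (hg₀nonneg x) _))
  -- the scaling parameter
  set t : ℝ := (M0 / Ξ) ^ ((1:ℝ) / P) with htdef
  have htpos : 0 < t := Real.rpow_pos_of_pos (div_pos hM0pos hΞpos) _
  have htP : t ^ P = M0 / Ξ := by
    rw [htdef, ← Real.rpow_mul (div_pos hM0pos hΞpos).le, one_div_mul_cancel hP.ne',
      Real.rpow_one]
  have htPΞ : t ^ P * Ξ = M0 := by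
    rw [htP]; field_simp
  have hlogt : Real.log t = (1 / P) * (Real.log M0 - Real.log Ξ) := by
    rw [htdef, Real.log_rpow (div_pos hM0pos hΞpos), Real.log_div hM0pos.ne' hΞpos.ne']
  -- scaled gaussian
  set mt : ℝ → ℝ := fun y => max (1 - (lam - 1) * |t * y| ^ P) 0 with hmtdef
  have hmtmeas : Measurable mt := by rw [hmtdef]; fun_prop
  have hmtnonneg : ∀ y, 0 ≤ mt y := fun y => le_max_right _ _
  set Gt : ℝ → ℝ := fun y => t ^ lam * a ^ lam * mt y ^ (lam / (lam - 1)) with hGtdef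
  have hGtmeas : Measurable Gt := by rw [hGtdef]; fun_prop
  have hGtnonneg : ∀ y, 0 ≤ Gt y := fun y => by
    rw [hGtdef]
    positivity
  have hg₀t : ∀ y, g₀ (t * y) = a * mt y ^ ((1:ℝ) / (lam - 1)) := fun y => hg₀ (t * y)
  have hmtz : ∀ y, mt y = 0 → 1 < lam := by
    intro y h
    by_contra hl
    push_neg at hl
    have h2 : lam < 1 := lt_of_le_of_ne hl hlam1
    exact absurd h (ne_of_gt (hmax_pos_of_lt h2 (t * y)))
  have hGt_eq : ∀ y, Gt y = t ^ lam * g₀ (t * y) ^ lam := by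
    intro y
    rw [hg₀t y, hpow_lam (mt y) (hmtnonneg y) (hmtz y), hGtdef]
    ring
  have hGtint : Integrable Gt := by
    have h1 : Integrable (fun y => g₀ (t * y) ^ lam) := hfin4.comp_mul_left' htpos.ne'
    exact (h1.const_mul (t ^ lam)).congr
      (Filter.Eventually.of_forall fun y => (hGt_eq y).symm)
  have hGtval : ∫ y, Gt y = t ^ (lam - 1) * G0 := by
    have e0 : lam + -1 = lam - 1 := by ring
    calc (∫ y, Gt y) = ∫ y, t ^ lam * g₀ (t * y) ^ lam :=
          integral_congr_ae (Filter.Eventually.of_forall hGt_eq)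
      _ = t ^ lam * ∫ y, (fun z => g₀ z ^ lam) (t * y) := integral_const_mul _ _
      _ = t ^ lam * (|t⁻¹| • ∫ z, g₀ z ^ lam) := by
          rw [Measure.integral_comp_mul_left (fun z => g₀ z ^ lam) t]
      _ = t ^ (lam - 1) * G0 := by
          rw [abs_of_pos (inv_pos.2 htpos), smul_eq_mul, ← hG0def]
          rw [show (t:ℝ)⁻¹ = t ^ (-1:ℝ) from (Real.rpow_neg_one t).symm]
          rw [← mul_assoc, ← Real.rpow_add htpos, e0]
  have hGtanti : AntitoneOn Gt (Ici 0) := by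
    intro y₁ h₁ y₂ h₂ h12
    have hup : |t * y₁| ^ P ≤ |t * y₂| ^ P := by
      apply Real.rpow_le_rpow (abs_nonneg _) _ hP.le
      rw [abs_of_nonneg (mul_nonneg htpos.le h₁), abs_of_nonneg (mul_nonneg htpos.le h₂)]
      exact mul_le_mul_of_nonneg_left h12 htpos.le
    rw [hGtdef]
    simp only
    rcases lt_or_gt_of_ne hlam1 with hl | hl
    · have hm12 : mt y₁ ≤ mt y₂ := max_le_max
        (by linarith [mul_le_mul_of_nonneg_left hup (by linarith : (0:ℝ) ≤ 1 - lam)]) le_rfl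
      have hmpos : 0 < mt y₁ := hmax_pos_of_lt hl (t * y₁)
      have h3 := Real.rpow_le_rpow_of_nonpos hmpos hm12
        (le_of_lt (div_neg_of_pos_of_neg hlam0 (by linarith : lam - 1 < 0)))
      exact mul_le_mul_of_nonneg_left h3 (by positivity)
    · have hm21 : mt y₂ ≤ mt y₁ := max_le_max
        (by linarith [mul_le_mul_of_nonneg_left hup (by linarith : (0:ℝ) ≤ lam - 1)]) le_rfl
      have h3 := Real.rpow_le_rpow (hmtnonneg y₂) hm21
        (le_of_lt (div_pos hlam0 (by linarith : (0:ℝ) < lam - 1)))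
      exact mul_le_mul_of_nonneg_left h3 (by positivity)
  -- substitution bound
  set S' : ENNReal := ∫⁻ x in I, ENNReal.ofReal (Gt (u x)) * ENNReal.ofReal (W x) with hS'def
  have hL3 : S' ≤ ENNReal.ofReal (t ^ (lam - 1) * G0) := by
    have hfull : S' = ∫⁻ x, ENNReal.ofReal (Gt (u x)) * wE x := by
      rw [hS'def, ← lintegral_indicator hImeas]
      refine lintegral_congr fun x => ?_
      by_cases hx : x ∈ I
      · rw [indicator_of_mem hx, hwEdef, indicator_of_mem hx]
      · rw [indicator_of_notMem hx, hwEdef, indicator_of_notMem hx, mul_zero]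
    rw [hfull]
    refine le_trans (subst_le I wE hwEmeas
      (fun x hx => by rw [hwEdef, indicator_of_notMem hx])
      uE (fun x => rfl) huEfin huEpos Gt hGtmeas hGtnonneg hGtanti) ?_
    calc (∫⁻ y in Ioi 0, ENNReal.ofReal (Gt y))
        ≤ ∫⁻ y, ENNReal.ofReal (Gt y) := setLIntegral_le_lintegral _ _
      _ = ENNReal.ofReal (∫ y, Gt y) :=
          (ofReal_integral_eq_lintegral_ofReal hGtint
            (Filter.Eventually.of_forall hGtnonneg)).symm
      _ = _ := by rw [hGtval]
  -- B
  set B : ℝ := ∫ x in I, f x * mt (u x) with hBdef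
  have hfint : Integrable f := by
    by_contra h
    rw [integral_undef h] at hf_int
    exact one_ne_zero hf_int.symm
  have habs_tu : ∀ x, |t * u x| ^ P = t ^ P * u x ^ P := by
    intro x
    rw [abs_of_nonneg (mul_nonneg htpos.le (hunonneg x)), Real.mul_rpow htpos.le (hunonneg x)]
  have hmtu_le : ∀ x, mt (u x) ≤ 1 + |lam - 1| * (t ^ P * u x ^ P) := by
    intro x
    apply max_le
    · have h1 : -(|lam - 1| * (t ^ P * u x ^ P)) ≤ (lam - 1) * (t ^ P * u x ^ P) := by
        have h2 : 0 ≤ t ^ P * u x ^ P :=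
          mul_nonneg (Real.rpow_nonneg htpos.le _) (Real.rpow_nonneg (hunonneg x) _)
        nlinarith [neg_abs_le (lam - 1), abs_nonneg (lam - 1)]
      rw [habs_tu x]
      linarith
    · positivity
  have hmtumeas : Measurable fun x => mt (u x) := hmtmeas.comp humeas
  have hBint : IntegrableOn (fun x => f x * mt (u x)) I := by
    apply Integrable.mono'
      (g := fun x => f x + |lam - 1| * t ^ P * (u x ^ P * f x))
      ((hfint.integrableOn).add (hΞint.const_mul _))
      ((hf_meas.mul hmtumeas).aestronglyMeasurable)
    refine Filter.Eventually.of_forall fun x => ?_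
    show ‖f x * mt (u x)‖ ≤ _
    rw [Real.norm_eq_abs, abs_of_nonneg (mul_nonneg (hf_nonneg x) (hmtnonneg _))]
    calc f x * mt (u x) ≤ f x * (1 + |lam - 1| * (t ^ P * u x ^ P)) :=
          mul_le_mul_of_nonneg_left (hmtu_le x) (hf_nonneg x)
      _ = f x + |lam - 1| * t ^ P * (u x ^ P * f x) := by ring
  have hintI_f : ∫ x in I, f x = 1 := by
    rw [setIntegral_eq_integral_of_forall_compl_eq_zero hf_supp]
    exact hf_int
  have hBnonneg : 0 ≤ B := by
    rw [hBdef]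
    exact setIntegral_nonneg hImeas fun x _ => mul_nonneg (hf_nonneg x) (hmtnonneg _)
  have hL1a : 1 < lam → 1 - (lam - 1) * M0 ≤ B := by
    intro hl
    have step : (∫ x in I, (f x - (lam - 1) * t ^ P * (u x ^ P * f x))) ≤ B := by
      rw [hBdef]
      apply setIntegral_mono_on ((hfint.integrableOn).sub (hΞint.const_mul _)) hBint hImeas
      intro x hx
      have h1 : 1 - (lam - 1) * (t ^ P * u x ^ P) ≤ mt (u x) := by
        refine le_trans (le_of_eq ?_) (le_max_left _ _)
        rw [habs_tu x]
      calc f x - (lam - 1) * t ^ P * (u x ^ P * f x)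
          = f x * (1 - (lam - 1) * (t ^ P * u x ^ P)) := by ring
        _ ≤ f x * mt (u x) := mul_le_mul_of_nonneg_left h1 (hf_nonneg x)
    have expand : (∫ x in I, (f x - (lam - 1) * t ^ P * (u x ^ P * f x)))
        = 1 - (lam - 1) * t ^ P * Ξ := by
      rw [integral_sub (hfint.integrableOn) (hΞint.const_mul _), integral_const_mul,
        hintI_f, ← hΞdef]
    rw [expand] at step
    have e3 : (lam - 1) * t ^ P * Ξ = (lam - 1) * M0 := by
      rw [mul_assoc, htPΞ]
    linarith
  have hL1b : lam < 1 → B = 1 + (1 - lam) * M0 := by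
    intro hl
    have hpt : ∀ x, f x * mt (u x) = f x + (1 - lam) * t ^ P * (u x ^ P * f x) := by
      intro x
      have hmx : mt (u x) = 1 - (lam - 1) * (t ^ P * u x ^ P) := by
        have h2 : 0 ≤ t ^ P * u x ^ P :=
          mul_nonneg (Real.rpow_nonneg htpos.le _) (Real.rpow_nonneg (hunonneg x) _)
        have : mt (u x) = max (1 - (lam - 1) * (t ^ P * u x ^ P)) 0 := by rw [← habs_tu x]
        rw [this, max_eq_left (by nlinarith)]
      rw [hmx]
      ring
    have : B = ∫ x in I, (f x + (1 - lam) * t ^ P * (u x ^ P * f x)) := by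
      rw [hBdef]
      exact setIntegral_congr_fun hImeas fun x _ => hpt x
    rw [this, integral_add (hfint.integrableOn) (hΞint.const_mul _), integral_const_mul,
      hintI_f, ← hΞdef]
    have e3 : (1 - lam) * t ^ P * Ξ = (1 - lam) * M0 := by rw [mul_assoc, htPΞ]
    linarith
  -- common value for B lower/exact bound
  have hBval : a ^ ((1:ℝ) - lam) * G0 = 1 - (lam - 1) * M0 := by
    linear_combination a ^ ((1:ℝ) - lam) * hG0id + (1 - (lam - 1) * M0) * ha1
  -- ENNReal bridges
  have hB' : (∫⁻ x in I, ENNReal.ofReal (f x) * ENNReal.ofReal (mt (u x)))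
      = ENNReal.ofReal B := by
    rw [hBdef, ofReal_integral_eq_lintegral_ofReal hBint
      (Filter.Eventually.of_forall fun x => mul_nonneg (hf_nonneg x) (hmtnonneg _))]
    exact lintegral_congr fun x => (ENNReal.ofReal_mul (hf_nonneg x)).symm
  have hF' : (∫⁻ x in I, ENNReal.ofReal (FI x)) = ENNReal.ofReal F := by
    rw [hFeq2, ofReal_integral_eq_lintegral_ofReal hFIint
      (Filter.Eventually.of_forall fun x => hFInonneg x)]
  have hFW : ∀ x ∈ I, ENNReal.ofReal (FI x)
      = ENNReal.ofReal (f x) ^ lam * ENNReal.ofReal (W x) ^ (1 - lam) := by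
    intro x hx
    have hd : 0 < f x ^ (r - 2) * |f' x| := hdpos x hx
    have hFIval : FI x = f x * (f x ^ (r - 2) * |f' x|) ^ q := by
      rw [hFIdef]
      simp only [hderiv x hx]
      rw [habsd x hx]
      ring
    have hWval : W x = f x * (f x ^ (r - 2) * |f' x|) ^ θ := by
      rw [hWeq x hx, Real.mul_rpow (Real.rpow_nonneg (hf_nonneg x) _) (abs_nonneg _),
        ← Real.rpow_mul (hf_nonneg x)]
      rw [show f x ^ (1 - (2 - r) * θ) = f x ^ (1 + (r - 2) * θ) from by ring_nf]
      rw [Real.rpow_add (hfpos x hx), Real.rpow_one]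
      ring
    have hq2 : θ * (1 - lam) = q := by
      rw [hθ]
      exact div_mul_cancel₀ q (by intro h; exact hlam1 (by linarith))
    have hreal : f x ^ lam * W x ^ (1 - lam) = FI x := by
      rw [hWval, hFIval, Real.mul_rpow (hfpos x hx).le (Real.rpow_nonneg hd.le _),
        ← Real.rpow_mul hd.le, hq2, ← mul_assoc, ← Real.rpow_add (hfpos x hx)]
      rw [show lam + (1 - lam) = 1 from by ring, Real.rpow_one]
    rw [ENNReal.ofReal_rpow_of_pos (hfpos x hx), ENNReal.ofReal_rpow_of_pos (hWpos x hx),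
      ← ENNReal.ofReal_mul (Real.rpow_nonneg (hf_nonneg x) _), hreal]
  -- reduce goal to log form
  have hq1lam : (1:ℝ) - lam ≠ 0 := by intro h; exact hlam1 (by linarith)
  rw [ge_iff_le, hstmt1]
  have hgoal2 : ((F ^ ((1:ℝ)/(q*r))) ^ (q*r/(lam-1))) = F ^ ((1:ℝ)/(lam-1)) := by
    rw [← Real.rpow_mul hFpos.le]
    congr 1
    field_simp
  rw [hgoal2]
  have hgoal3 : G0 ^ ((1:ℝ)/(1-lam)) = (G0 ^ ((1:ℝ)/(lam-1)))⁻¹ := by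
    rw [← Real.rpow_neg hG0pos.le]
    congr 1
    rw [show lam - 1 = -(1-lam) from by ring, div_neg, neg_neg]
  rw [hgoal3, div_inv_eq_mul]
  rw [← Real.log_le_log_iff
    (mul_pos (Real.rpow_pos_of_pos hM0pos _) (Real.rpow_pos_of_pos hG0pos _))
    (mul_pos (Real.rpow_pos_of_pos hΞpos _) (Real.rpow_pos_of_pos hFpos _))]
  rw [Real.log_mul (Real.rpow_pos_of_pos hM0pos _).ne' (Real.rpow_pos_of_pos hG0pos _).ne',
    Real.log_mul (Real.rpow_pos_of_pos hΞpos _).ne' (Real.rpow_pos_of_pos hFpos _).ne',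
    Real.log_rpow hM0pos, Real.log_rpow hG0pos, Real.log_rpow hΞpos, Real.log_rpow hFpos]
  -- goal : 1/P * log M0 + 1/(lam-1) * log G0 ≤ 1/P * log Ξ + 1/(lam-1) * log F
  have hcpos : (0:ℝ) < t ^ lam * a ^ lam := by positivity
  have hKpos : (0:ℝ) < t ^ (lam - 1) * G0 :=
    mul_pos (Real.rpow_pos_of_pos htpos _) hG0pos
  have hc0 : ENNReal.ofReal (t ^ lam * a ^ lam) ≠ 0 := (ENNReal.ofReal_pos.2 hcpos).ne'
  have hctop : ENNReal.ofReal (t ^ lam * a ^ lam) ≠ ⊤ := ENNReal.ofReal_ne_top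
  rcases lt_or_gt_of_ne hlam1 with hl | hl
  · -- case lam < 1
    have hconj : Real.HolderConjugate (1/lam) (1/(1-lam)) := by
      refine Real.holderConjugate_iff.mpr ⟨?_, ?_⟩
      · rw [lt_div_iff₀ hlam0]; linarith
      · simp only [one_div, inv_inv]
        ring
    set X : ℝ → ENNReal := fun x => ENNReal.ofReal (f x) * ENNReal.ofReal (mt (u x)) with hXdef
    set Y : ℝ → ENNReal := fun x => ENNReal.ofReal (Gt (u x)) * ENNReal.ofReal (W x) with hYdef
    have hXm : Measurable X := by
      rw [hXdef]
      exact (ENNReal.measurable_ofReal.comp hf_meas).mul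
        (ENNReal.measurable_ofReal.comp hmtumeas)
    have hYm : Measurable Y := by
      rw [hYdef]
      exact (ENNReal.measurable_ofReal.comp (hGtmeas.comp humeas)).mul
        (ENNReal.measurable_ofReal.comp hWmeas)
    have hH := ENNReal.lintegral_mul_le_Lp_mul_Lq (volume.restrict I) hconj
      ((by fun_prop : Measurable fun x => X x ^ lam)).aemeasurable
      ((by fun_prop : Measurable fun x => Y x ^ ((1:ℝ)-lam))).aemeasurable
    have hmt1 : ∀ x, (1:ℝ) ≤ mt (u x) := by
      intro x
      refine le_trans ?_ (le_max_left _ _)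
      nlinarith [Real.rpow_nonneg (abs_nonneg (t * u x)) P]
    have e1 : (∫⁻ x in I, ((fun x => X x ^ lam) * (fun x => Y x ^ ((1:ℝ)-lam))) x)
        = ENNReal.ofReal ((t^lam*a^lam) ^ ((1:ℝ)-lam)) * ENNReal.ofReal F := by
      rw [← hF', ← lintegral_const_mul _
        (show Measurable fun x => ENNReal.ofReal (FI x) from
          ENNReal.measurable_ofReal.comp hFImeas)]
      refine setLIntegral_congr_fun hImeas (fun x hx => ?_)
      have hm1E : (1:ENNReal) ≤ ENNReal.ofReal (mt (u x)) := by
        rw [← ENNReal.ofReal_one]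
        exact ENNReal.ofReal_le_ofReal (hmt1 x)
      have hm0 : ENNReal.ofReal (mt (u x)) ≠ 0 := (lt_of_lt_of_le zero_lt_one hm1E).ne'
      have hmtop : ENNReal.ofReal (mt (u x)) ≠ ⊤ := ENNReal.ofReal_ne_top
      have hYpt : Y x = ENNReal.ofReal (t^lam*a^lam)
          * (ENNReal.ofReal (mt (u x)) ^ (lam/(lam-1)) * ENNReal.ofReal (W x)) := by
        rw [hYdef]
        simp only
        rw [hGtdef]
        simp only
        rw [ENNReal.ofReal_mul hcpos.le,
          ← ENNReal.ofReal_rpow_of_pos (lt_of_lt_of_le one_pos (hmt1 x)), mul_assoc]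
      have hYpow : Y x ^ ((1:ℝ)-lam) = ENNReal.ofReal (t^lam*a^lam) ^ ((1:ℝ)-lam)
          * (ENNReal.ofReal (mt (u x)) ^ (lam/(lam-1) * ((1:ℝ)-lam))
            * ENNReal.ofReal (W x) ^ ((1:ℝ)-lam)) := by
        rw [hYpt, ENNReal.mul_rpow_of_nonneg _ _ (by linarith : (0:ℝ) ≤ 1 - lam),
          ENNReal.mul_rpow_of_nonneg _ _ (by linarith : (0:ℝ) ≤ 1 - lam),
          ← ENNReal.rpow_mul]
      have hXpow : X x ^ lam
          = ENNReal.ofReal (f x) ^ lam * ENNReal.ofReal (mt (u x)) ^ lam := by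
        rw [hXdef]
        simp only
        rw [ENNReal.mul_rpow_of_nonneg _ _ hlam0.le]
      have hmm : ENNReal.ofReal (mt (u x)) ^ lam
          * ENNReal.ofReal (mt (u x)) ^ (lam/(lam-1) * ((1:ℝ)-lam)) = 1 := by
        rw [← ENNReal.rpow_add _ _ hm0 hmtop,
          show lam + lam/(lam-1)*((1:ℝ)-lam) = 0 from by field_simp; ring,
          ENNReal.rpow_zero]
      simp only [Pi.mul_apply]
      rw [hXpow, hYpow, hFW x hx, ← ENNReal.ofReal_rpow_of_pos hcpos]
      calc ENNReal.ofReal (f x) ^ lam * ENNReal.ofReal (mt (u x)) ^ lam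
          * (ENNReal.ofReal (t^lam*a^lam) ^ ((1:ℝ)-lam)
            * (ENNReal.ofReal (mt (u x)) ^ (lam/(lam-1) * ((1:ℝ)-lam))
              * ENNReal.ofReal (W x) ^ ((1:ℝ)-lam)))
          = ENNReal.ofReal (t^lam*a^lam) ^ ((1:ℝ)-lam)
            * (ENNReal.ofReal (f x) ^ lam * ENNReal.ofReal (W x) ^ ((1:ℝ)-lam))
            * (ENNReal.ofReal (mt (u x)) ^ lam
              * ENNReal.ofReal (mt (u x)) ^ (lam/(lam-1) * ((1:ℝ)-lam))) := by ring
        _ = _ := by rw [hmm, mul_one]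
    have r1 : ∀ z : ENNReal, (z ^ lam) ^ ((1:ℝ)/lam) = z := fun z => by
      rw [← ENNReal.rpow_mul, show lam * ((1:ℝ)/lam) = 1 from by field_simp,
        ENNReal.rpow_one]
    have r2 : ∀ z : ENNReal, (z ^ ((1:ℝ)-lam)) ^ ((1:ℝ)/(1-lam)) = z := fun z => by
      rw [← ENNReal.rpow_mul, show ((1:ℝ)-lam) * ((1:ℝ)/(1-lam)) = 1 from by field_simp,
        ENNReal.rpow_one]
    have hH' : (∫⁻ x in I, ((fun x => X x ^ lam) * (fun x => Y x ^ ((1:ℝ)-lam))) x)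
        ≤ (∫⁻ x in I, X x) ^ lam * (∫⁻ x in I, Y x) ^ ((1:ℝ)-lam) := by
      have r3 : (1:ℝ)/(1/lam) = lam := one_div_one_div lam
      have r4 : (1:ℝ)/(1/(1-lam)) = 1-lam := one_div_one_div _
      calc (∫⁻ x in I, ((fun x => X x ^ lam) * (fun x => Y x ^ ((1:ℝ)-lam))) x)
          ≤ (∫⁻ x in I, (X x ^ lam) ^ ((1:ℝ)/lam)) ^ ((1:ℝ)/(1/lam))
            * (∫⁻ x in I, (Y x ^ ((1:ℝ)-lam)) ^ ((1:ℝ)/(1-lam))) ^ ((1:ℝ)/(1/(1-lam))) := by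
            simpa [one_div] using hH
        _ = (∫⁻ x in I, X x) ^ lam * (∫⁻ x in I, Y x) ^ ((1:ℝ)-lam) := by
            rw [r3, r4]
            congr 1
            · congr 1
              exact lintegral_congr fun x => r1 (X x)
            · congr 1
              exact lintegral_congr fun x => r2 (Y x)
    have hineq : ENNReal.ofReal ((t^lam*a^lam)^((1:ℝ)-lam)) * ENNReal.ofReal F
        ≤ ENNReal.ofReal B ^ lam * ENNReal.ofReal (t^(lam-1)*G0) ^ ((1:ℝ)-lam) := by
      rw [← e1]
      refine le_trans hH' ?_
      have hXB : (∫⁻ x in I, X x) = ENNReal.ofReal B := hB'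
      have hYS : (∫⁻ x in I, Y x) = S' := rfl
      rw [hXB, hYS]
      exact mul_le_mul_right (ENNReal.rpow_le_rpow hL3 (by linarith : (0:ℝ) ≤ 1 - lam)) _
    have hBpos : 0 < B := by
      rw [hL1b hl]
      nlinarith [hM0pos]
    have hmainr : (t^lam*a^lam)^((1:ℝ)-lam) * F
        ≤ B ^ lam * (t^(lam-1)*G0) ^ ((1:ℝ)-lam) := by
      refine (ENNReal.ofReal_le_ofReal_iff (by positivity)).1 ?_
      rw [ENNReal.ofReal_mul (Real.rpow_nonneg hcpos.le _),
        ENNReal.ofReal_mul (Real.rpow_nonneg hBpos.le _),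
        ← ENNReal.ofReal_rpow_of_pos hBpos, ← ENNReal.ofReal_rpow_of_pos hKpos]
      exact hineq
    have hBeq : B = a ^ ((1:ℝ)-lam) * G0 := by
      rw [hL1b hl]
      linarith [hBval]
    have h12 := (Real.log_le_log_iff (mul_pos (Real.rpow_pos_of_pos hcpos _) hFpos)
      (mul_pos (Real.rpow_pos_of_pos hBpos _) (Real.rpow_pos_of_pos hKpos _))).2 hmainr
    rw [Real.log_mul (Real.rpow_pos_of_pos hcpos _).ne' hFpos.ne',
      Real.log_mul (Real.rpow_pos_of_pos hBpos _).ne' (Real.rpow_pos_of_pos hKpos _).ne',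
      Real.log_rpow hcpos, Real.log_rpow hBpos, Real.log_rpow hKpos,
      Real.log_mul (Real.rpow_pos_of_pos htpos _).ne' (Real.rpow_pos_of_pos ha _).ne',
      Real.log_rpow htpos, Real.log_rpow ha, hBeq,
      Real.log_mul (Real.rpow_pos_of_pos ha _).ne' hG0pos.ne', Real.log_rpow ha,
      Real.log_mul (Real.rpow_pos_of_pos htpos _).ne' hG0pos.ne',
      Real.log_rpow htpos] at h12
    have hkey : Real.log F ≤ Real.log G0 + (lam - 1) * Real.log t := by nlinarith [h12]
    have h5 := mul_le_mul_of_nonneg_left hkey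
      (le_of_lt (one_div_pos.2 (by linarith : (0:ℝ) < 1 - lam)))
    have h6 : (1/(1 - lam)) * ((lam - 1) * Real.log t) = -Real.log t := by
      rw [show lam - 1 = -(1-lam) from by ring]
      field_simp
    have hco : (1:ℝ)/(lam-1) = -(1/(1-lam)) := by
      rw [show lam - 1 = -(1-lam) from by ring, div_neg]
    rw [hco]
    linarith [h5, h6, hlogt]
  · -- case 1 < lam
    have hconj : Real.HolderConjugate lam (lam / (lam - 1)) := by
      refine Real.holderConjugate_iff.mpr ⟨hl, ?_⟩
      rw [inv_div]
      field_simp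
      ring
    set φ : ℝ → ENNReal :=
      fun x => ENNReal.ofReal (f x) * ENNReal.ofReal (W x) ^ ((1 - lam)/lam) with hφdef
    set ψ : ℝ → ENNReal :=
      fun x => ENNReal.ofReal (mt (u x)) * ENNReal.ofReal (W x) ^ ((lam - 1)/lam) with hψdef
    have hφm : Measurable φ := by rw [hφdef]; fun_prop
    have hψm : Measurable ψ := by
      rw [hψdef]
      apply Measurable.mul
      · exact ENNReal.measurable_ofReal.comp hmtumeas
      · fun_prop
    have hH := ENNReal.lintegral_mul_le_Lp_mul_Lq (volume.restrict I) hconj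
      hφm.aemeasurable hψm.aemeasurable
    have e1 : (∫⁻ x in I, (φ * ψ) x) = ENNReal.ofReal B := by
      rw [← hB']
      refine setLIntegral_congr_fun hImeas (fun x hx => ?_)
      have hW0 : ENNReal.ofReal (W x) ≠ 0 := (ENNReal.ofReal_pos.2 (hWpos x hx)).ne'
      have h1 : (φ * ψ) x = (ENNReal.ofReal (f x) * ENNReal.ofReal (mt (u x)))
          * (ENNReal.ofReal (W x) ^ ((1 - lam)/lam) * ENNReal.ofReal (W x) ^ ((lam - 1)/lam)) := by
        simp only [Pi.mul_apply, hφdef, hψdef]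
        ring
      rw [h1, ← ENNReal.rpow_add _ _ hW0 ENNReal.ofReal_ne_top,
        show (1 - lam)/lam + (lam - 1)/lam = 0 from by ring, ENNReal.rpow_zero, mul_one]
    have e2 : (∫⁻ x in I, φ x ^ lam) = ENNReal.ofReal F := by
      rw [← hF']
      refine setLIntegral_congr_fun hImeas (fun x hx => ?_)
      rw [hFW x hx, hφdef]
      simp only
      rw [ENNReal.mul_rpow_of_nonneg _ _ hlam0.le, ← ENNReal.rpow_mul,
        show (1 - lam)/lam * lam = 1 - lam from by field_simp]
    have e3 : S' = ENNReal.ofReal (t ^ lam * a ^ lam)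
        * ∫⁻ x in I, ψ x ^ (lam / (lam - 1)) := by
      rw [hS'def, ← lintegral_const_mul _ (by fun_prop : Measurable fun x => ψ x ^ (lam/(lam-1)))]
      refine setLIntegral_congr_fun hImeas (fun x hx => ?_)
      have hψpow : ψ x ^ (lam / (lam - 1))
          = ENNReal.ofReal (mt (u x)) ^ (lam / (lam - 1)) * ENNReal.ofReal (W x) := by
        rw [hψdef]
        simp only
        rw [ENNReal.mul_rpow_of_nonneg _ _ (le_of_lt (div_pos hlam0 (by linarith))),
          ← ENNReal.rpow_mul,
          show (lam - 1)/lam * (lam/(lam - 1)) = 1 from by field_simp, ENNReal.rpow_one]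
      have hGtu : ENNReal.ofReal (Gt (u x)) = ENNReal.ofReal (t ^ lam * a ^ lam)
          * ENNReal.ofReal (mt (u x)) ^ (lam / (lam - 1)) := by
        rw [hGtdef]
        simp only
        rw [ENNReal.ofReal_mul hcpos.le, ENNReal.ofReal_rpow_of_nonneg (hmtnonneg _)
          (le_of_lt (div_pos hlam0 (by linarith)))]
      rw [hGtu, hψpow]
      ring
    have hZle : (∫⁻ x in I, ψ x ^ (lam / (lam - 1)))
        ≤ (ENNReal.ofReal (t ^ lam * a ^ lam))⁻¹ * ENNReal.ofReal (t ^ (lam - 1) * G0) := by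
      have h2 : ENNReal.ofReal (t ^ lam * a ^ lam) * (∫⁻ x in I, ψ x ^ (lam / (lam - 1)))
          ≤ ENNReal.ofReal (t ^ (lam - 1) * G0) := by rw [← e3]; exact hL3
      rw [← one_mul (∫⁻ x in I, ψ x ^ (lam / (lam - 1))), ← ENNReal.inv_mul_cancel hc0 hctop,
        mul_assoc]
      exact mul_le_mul_right h2 _
    set D : ℝ := (t ^ lam * a ^ lam)⁻¹ * (t ^ (lam - 1) * G0) with hDdef
    have hDpos : 0 < D := by
      rw [hDdef]; exact mul_pos (inv_pos.2 hcpos) hKpos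
    have hmain : ENNReal.ofReal B
        ≤ ENNReal.ofReal (F ^ ((1:ℝ)/lam) * D ^ ((lam - 1)/lam)) := by
      rw [← e1] at *
      calc (∫⁻ x in I, (φ * ψ) x)
          ≤ (∫⁻ x in I, φ x ^ lam) ^ ((1:ℝ)/lam)
            * (∫⁻ x in I, ψ x ^ (lam/(lam - 1))) ^ (1/(lam/(lam - 1))) := hH
        _ ≤ (ENNReal.ofReal F) ^ ((1:ℝ)/lam)
            * ((ENNReal.ofReal (t ^ lam * a ^ lam))⁻¹
              * ENNReal.ofReal (t ^ (lam - 1) * G0)) ^ (1/(lam/(lam - 1))) := by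
            rw [e2]
            exact mul_le_mul_right (ENNReal.rpow_le_rpow hZle
              (by rw [one_div_div]; exact le_of_lt (div_pos (by linarith) hlam0))) _
        _ = ENNReal.ofReal (F ^ ((1:ℝ)/lam) * D ^ ((lam - 1)/lam)) := by
            rw [one_div_div, ENNReal.ofReal_rpow_of_pos hFpos,
              ← ENNReal.ofReal_inv_of_pos hcpos,
              ← ENNReal.ofReal_mul (inv_nonneg.2 hcpos.le), ← hDdef,
              ENNReal.ofReal_rpow_of_pos hDpos,
              ← ENNReal.ofReal_mul (Real.rpow_nonneg hFpos.le _)]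
    have hmainr : B ≤ F ^ ((1:ℝ)/lam) * D ^ ((lam - 1)/lam) :=
      (ENNReal.ofReal_le_ofReal_iff (by positivity)).1 hmain
    have h9 : a ^ ((1:ℝ) - lam) * G0 ≤ F ^ ((1:ℝ)/lam) * D ^ ((lam - 1)/lam) := by
      have := hL1a hl
      rw [hBval]
      linarith
    have hapos : (0:ℝ) < a ^ ((1:ℝ) - lam) * G0 :=
      mul_pos (Real.rpow_pos_of_pos ha _) hG0pos
    have h10 : (a ^ ((1:ℝ) - lam) * G0) ^ lam
        ≤ (F ^ ((1:ℝ)/lam) * D ^ ((lam - 1)/lam)) ^ lam :=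
      Real.rpow_le_rpow hapos.le h9 hlam0.le
    have h11 : (F ^ ((1:ℝ)/lam) * D ^ ((lam - 1)/lam)) ^ lam = F * D ^ (lam - 1) := by
      rw [Real.mul_rpow (Real.rpow_nonneg hFpos.le _) (Real.rpow_nonneg hDpos.le _),
        ← Real.rpow_mul hFpos.le, ← Real.rpow_mul hDpos.le,
        show (1:ℝ)/lam * lam = 1 from by field_simp,
        show (lam - 1)/lam * lam = lam - 1 from by field_simp, Real.rpow_one]
    rw [h11] at h10
    have h12 : Real.log ((a ^ ((1:ℝ) - lam) * G0) ^ lam) ≤ Real.log (F * D ^ (lam - 1)) :=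
      (Real.log_le_log_iff (Real.rpow_pos_of_pos hapos _)
        (mul_pos hFpos (Real.rpow_pos_of_pos hDpos _))).2 h10
    rw [Real.log_rpow hapos, Real.log_mul (Real.rpow_pos_of_pos ha _).ne' hG0pos.ne',
      Real.log_rpow ha, Real.log_mul hFpos.ne' (Real.rpow_pos_of_pos hDpos _).ne',
      Real.log_rpow hDpos, hDdef, Real.log_mul (inv_pos.2 hcpos).ne' hKpos.ne',
      Real.log_inv, Real.log_mul (Real.rpow_pos_of_pos htpos _).ne'
        (Real.rpow_pos_of_pos ha _).ne',
      Real.log_rpow htpos, Real.log_rpow ha,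
      Real.log_mul (Real.rpow_pos_of_pos htpos _).ne' hG0pos.ne',
      Real.log_rpow htpos] at h12
    have hkey : Real.log G0 + (lam - 1) * Real.log t ≤ Real.log F := by nlinarith [h12]
    have h5 := mul_le_mul_of_nonneg_left hkey
      (le_of_lt (one_div_pos.2 (by linarith : (0:ℝ) < lam - 1)))
    have h6 : (1/(lam - 1)) * ((lam - 1) * Real.log t) = Real.log t := by
      field_simp
    linarith [h5, h6, hlogt]
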